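/- (Growth bound on the denominators.) For every integer k ≥ 1 and every Λ > 0 there exists a constant C > 0 such that for all λ ∈ ℂ with |λ| ≤ Λ, all z ∈ ℂ and all q_1,…,q_k ∈ ℝ: |A_k(z)|² ≤ C · (1 + |z|²) · ∏_{i=1}^{k} (1 + q_i²), where A_0(z) = 1, A_1(z) = z + 1 + λ − q_1, A_k(z) = (1 + λ − q_k)A_{k−1}(z) − A_{k−2}(z). -/

import Mathlib

noncomputable section

/-- The denominator sequence: `A_0 = 1`, `A_1 = z + 1 + λ − q_1`,
`A_k = (1 + λ − q_k)A_{k−1} − A_{k−2}`, where `q_k` is `q (k-1)`. -/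
def denomA (lam : ℂ) (q : ℕ → ℝ) : ℕ → ℂ → ℂ
  | 0, _ => 1
  | 1, z => z + 1 + lam - (q 0 : ℂ)
  | (k+2), z => (1 + lam - (q (k+1) : ℂ)) * denomA lam q (k+1) z - denomA lam q k z

set_option maxHeartbeats 1600000 in
/-- **growth bound on the denominators.** For every `k ≥ 1` and
`Λ > 0` there is `C > 0` such that for all `|λ| ≤ Λ`, all `z ∈ ℂ` and all
`q_1,…,q_k ∈ ℝ`: `|A_k(z)|² ≤ C·(1+|z|²)·∏_{i=1}^k (1+q_i²)`. -/
theorem statement16 (k : ℕ) (hk : 1 ≤ k) (Λ : ℝ) (hΛ : 0 < Λ) :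
    ∃ C > (0 : ℝ), ∀ lam : ℂ, ‖lam‖ ≤ Λ → ∀ z : ℂ, ∀ q : ℕ → ℝ,
      ‖denomA lam q k z‖ ^ 2 ≤
        C * (1 + ‖z‖ ^ 2) * ∏ i ∈ Finset.range k, (1 + q i ^ 2) := by
  have hΛ1 : (1:ℝ) ≤ 1 + Λ := by linarith
  have hc2 : (1:ℝ) ≤ (1+Λ)^2 := by nlinarith
  set M : ℝ := 6*(1+Λ)^2 with hMdef
  have hM1 : (1:ℝ) ≤ M := by nlinarith
  have hM0 : (0:ℝ) < M := by linarith
  refine ⟨M^k, by positivity, ?_⟩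
  suffices h : ∀ n, ∀ lam : ℂ, ‖lam‖ ≤ Λ → ∀ z : ℂ, ∀ q : ℕ → ℝ,
      ‖denomA lam q n z‖^2 ≤
        M^n * (1+‖z‖^2) * ∏ i ∈ Finset.range n, (1+q i^2) from
    fun lam hlam z q => h k lam hlam z q
  intro n
  induction n using Nat.strong_induction_on with
  | _ n ih =>
  have prod_ge_one : ∀ (q : ℕ → ℝ) (m : ℕ), (1:ℝ) ≤ ∏ i ∈ Finset.range m, (1+q i^2) := by
    intro q m
    induction m with
    | zero => simp
    | succ n ihm => rw [Finset.prod_range_succ]; nlinarith [sq_nonneg (q n)]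
  match n with
  | 0 =>
    intro lam hlam z q
    simp [denomA]
  | 1 =>
    intro lam hlam z q
    have h1 : ‖denomA lam q 1 z‖ ≤ ‖z‖ + (1+Λ) + |q 0| := by
      simp only [denomA]
      calc ‖z + 1 + lam - (q 0:ℂ)‖ ≤ ‖z + 1 + lam‖ + ‖(q 0:ℂ)‖ := norm_sub_le _ _
        _ ≤ ‖z + 1‖ + ‖lam‖ + ‖(q 0:ℂ)‖ := by gcongr; exact norm_add_le _ _
        _ ≤ (‖z‖ + ‖(1:ℂ)‖) + ‖lam‖ + ‖(q 0:ℂ)‖ := by gcongr; exact norm_add_le _ _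
        _ = ‖z‖ + 1 + ‖lam‖ + |q 0| := by simp [Complex.norm_real]
        _ ≤ ‖z‖ + (1+Λ) + |q 0| := by
            have := hlam; linarith
    set a := ‖z‖ with ha
    set b := |q 0| with hb
    have hz : 0 ≤ a := norm_nonneg _
    have hq : 0 ≤ b := abs_nonneg _
    have hq2 : b^2 = q 0 ^ 2 := sq_abs _
    have hA : 0 ≤ ‖denomA lam q 1 z‖ := norm_nonneg _
    rw [Finset.prod_range_one]
    have s0 : ‖denomA lam q 1 z‖ ^ 2 ≤ (a + (1+Λ) + b)^2 := by
      have := pow_le_pow_left₀ hA h1 2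
      exact this
    have s1 : (a + (1+Λ) + b)^2 ≤ 3*(a^2+(1+Λ)^2+b^2) := by
      nlinarith [sq_nonneg (a-(1+Λ)), sq_nonneg (a-b), sq_nonneg ((1+Λ)-b)]
    have s2 : 3*(a^2+(1+Λ)^2+b^2) ≤ 6*(1+Λ)^2*(1+a^2)*(1+b^2) := by
      nlinarith [mul_nonneg (sub_nonneg.2 hc2) (sq_nonneg a),
        mul_nonneg (sub_nonneg.2 hc2) (sq_nonneg b),
        mul_nonneg (mul_nonneg (by positivity : (0:ℝ) ≤ (1+Λ)^2) (sq_nonneg a)) (sq_nonneg b)]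
    have : ‖denomA lam q 1 z‖ ^ 2 ≤ 6*(1+Λ)^2*(1+a^2)*(1+b^2) := by linarith
    rw [pow_one]
    calc ‖denomA lam q 1 z‖ ^ 2 ≤ 6*(1+Λ)^2*(1+a^2)*(1+b^2) := this
      _ = M * (1+a^2) * (1+q 0^2) := by rw [hMdef, ← hq2]
  | (m+2) =>
    intro lam hlam z q
    have h1 := ih (m+1) (by omega) lam hlam z q
    have h0 := ih m (by omega) lam hlam z q
    have htri : ‖denomA lam q (m+2) z‖ ≤
        ‖1 + lam - (q (m+1):ℂ)‖ * ‖denomA lam q (m+1) z‖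
          + ‖denomA lam q m z‖ := by
      simp only [denomA]
      calc ‖(1 + lam - (q (m+1):ℂ)) * denomA lam q (m+1) z - denomA lam q m z‖
          ≤ ‖(1 + lam - (q (m+1):ℂ)) * denomA lam q (m+1) z‖ + ‖denomA lam q m z‖ :=
            norm_sub_le _ _
        _ = ‖1 + lam - (q (m+1):ℂ)‖ * ‖denomA lam q (m+1) z‖ + ‖denomA lam q m z‖ := by
            rw [norm_mul]
    set A1 := ‖denomA lam q (m+1) z‖ with hA1
    set A0 := ‖denomA lam q m z‖ with hA0
    have hA1n : 0 ≤ A1 := norm_nonneg _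
    have hA0n : 0 ≤ A0 := norm_nonneg _
    set x := ‖1 + lam - (q (m+1):ℂ)‖ with hx
    have hxn : 0 ≤ x := norm_nonneg _
    have hxle : x ≤ (1+Λ) + |q (m+1)| := by
      simp only [hx]
      calc ‖1 + lam - (q (m+1):ℂ)‖ ≤ ‖(1:ℂ) + lam‖ + ‖(q (m+1):ℂ)‖ := norm_sub_le _ _
        _ ≤ ‖(1:ℂ)‖ + ‖lam‖ + ‖(q (m+1):ℂ)‖ := by gcongr; exact norm_add_le _ _
        _ = 1 + ‖lam‖ + |q (m+1)| := by simp [Complex.norm_real]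
        _ ≤ (1+Λ) + |q (m+1)| := by
            have := hlam; linarith
    have hAn : 0 ≤ ‖denomA lam q (m+2) z‖ := norm_nonneg _
    have hsq : ‖denomA lam q (m+2) z‖ ^ 2 ≤ 2*x^2*A1^2 + 2*A0^2 := by
      have h2 : ‖denomA lam q (m+2) z‖ ^ 2 ≤ (x*A1 + A0)^2 :=
        pow_le_pow_left₀ hAn htri 2
      nlinarith [sq_nonneg (x*A1 - A0)]
    have hx2 : x^2 ≤ 2*(1+Λ)^2*(1+q (m+1)^2) := by
      have hb2 : |q (m+1)|^2 = q (m+1)^2 := sq_abs _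
      have h3 : x^2 ≤ ((1+Λ) + |q (m+1)|)^2 := pow_le_pow_left₀ hxn hxle 2
      nlinarith [sq_nonneg ((1+Λ) - |q (m+1)|), sub_nonneg.2 hc2]
    set P0 := ∏ i ∈ Finset.range m, (1+q i^2) with hP0
    set P1 := ∏ i ∈ Finset.range (m+1), (1+q i^2) with hP1
    have hP0ge : (1:ℝ) ≤ P0 := prod_ge_one q m
    have hP1ge : (1:ℝ) ≤ P1 := prod_ge_one q (m+1)
    have hP1eq : P1 = P0 * (1+q m^2) := Finset.prod_range_succ _ _
    have hP2eq : ∏ i ∈ Finset.range (m+2), (1+q i^2) = P1 * (1+q (m+1)^2) :=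
      Finset.prod_range_succ _ _
    have hP01 : P0 ≤ P1 := by nlinarith [sq_nonneg (q m)]
    have hT : (0:ℝ) ≤ 1 + ‖z‖^2 := by positivity
    have hMm : (0:ℝ) < M^m := pow_pos hM0 m
    have hq1 : (1:ℝ) ≤ 1 + q (m+1)^2 := by nlinarith [sq_nonneg (q (m+1))]
    rw [hP2eq]
    have hMM1 : M^(m+1) = 6*(1+Λ)^2*M^m := by simp only [hMdef]; ring
    have hMM2 : M^(m+2) = 36*((1+Λ)^2*(1+Λ)^2)*M^m := by simp only [hMdef]; ring
    have t1 : x^2*A1^2 ≤ (2*(1+Λ)^2*(1+q (m+1)^2)) * (M^(m+1)*(1+‖z‖^2)*P1) :=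
      mul_le_mul hx2 h1 (sq_nonneg _) (by positivity)
    have fact1 : M^m * ((1+‖z‖^2) * P0)
        ≤ M^m * ((1+‖z‖^2) * ((1+q (m+1)^2) * P1)) := by
      apply mul_le_mul_of_nonneg_left _ hMm.le
      apply mul_le_mul_of_nonneg_left _ hT
      nlinarith
    have fact2 : (0:ℝ) ≤ M^m * ((1+‖z‖^2) * ((1+q (m+1)^2) * P1)) := by
      apply mul_nonneg hMm.le
      apply mul_nonneg hT
      exact mul_nonneg (by linarith) (by linarith)
    have fact3 : (0:ℝ) ≤ ((1+Λ)^2*(1+Λ)^2 - 1)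
        * (M^m * ((1+‖z‖^2) * ((1+q (m+1)^2) * P1))) := by
      apply mul_nonneg _ fact2
      nlinarith
    calc ‖denomA lam q (m+2) z‖ ^ 2
        ≤ 2*x^2*A1^2 + 2*A0^2 := hsq
      _ ≤ 2*((2*(1+Λ)^2*(1+q (m+1)^2)) * (M^(m+1)*(1+‖z‖^2)*P1))
          + 2*(M^m * (1+‖z‖^2) * P0) := by nlinarith [t1, h0]
      _ ≤ M^(m+2) * (1+‖z‖^2) * (P1 * (1+q (m+1)^2)) := by
          rw [hMM1, hMM2]
          nlinarith [fact1, fact2, fact3]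

end
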